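/- Assume the block-Lipschitz assumption holds with matrices Q^1,…,Q^m and constant L. For any x, y ∈ ℝ^d and j ∈ {1,…,m}, let w_j ∈ ℝ^d be the vector whose first j blocks agree with x and whose remaining blocks agree with y, i.e., w_j = (x^(1),…,x^(j), y^(j+1),…,y^(m)). Then Σ_{j=1}^m ‖x − w_j‖²_{Q^j} ≤ ‖y − x‖²_{Q̃} ≤ (L²/2)‖y − x‖². -/

import Mathlib

noncomputable section
open MeasureTheory Finset Set RealInnerProductSpace

abbrev Euc (d : ℕ) := EuclideanSpace ℝ (Fin d)

def blockMask {d m : ℕ} (blk : Fin d → Fin m) (j : Fin m) (z : Euc d) : Euc d :=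
  (EuclideanSpace.equiv (Fin d) ℝ).symm fun i => if blk i = j then z i else 0

def blockCombine {d m : ℕ} (blk : Fin d → Fin m) (j : ℕ) (x y : Euc d) : Euc d :=
  (EuclideanSpace.equiv (Fin d) ℝ).symm fun i => if (blk i : ℕ) + 1 ≤ j then x i else y i

def quadForm {d : ℕ} (Q : Matrix (Fin d) (Fin d) ℝ) (z : Euc d) : ℝ :=
  ∑ i, ∑ i', Q i i' * z i * z i'

def keepGE {d m : ℕ} (blk : Fin d → Fin m) (j : ℕ) (Q : Matrix (Fin d) (Fin d) ℝ) :
    Matrix (Fin d) (Fin d) ℝ :=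
  Matrix.of fun i i' => if j ≤ (blk i : ℕ) + 1 ∧ j ≤ (blk i' : ℕ) + 1 then Q i i' else 0

def Qtilde {d m : ℕ} (blk : Fin d → Fin m) (Q : Fin m → Matrix (Fin d) (Fin d) ℝ) :
    Matrix (Fin d) (Fin d) ℝ :=
  ∑ j : Fin m, (keepGE blk ((j : ℕ) + 1) (Q j) + keepGE blk ((j : ℕ) + 2) (Q j))

def specNorm {d : ℕ} (Q : Matrix (Fin d) (Fin d) ℝ) : ℝ :=
  ‖Matrix.toEuclideanCLM (𝕜 := ℝ) Q‖

def bigL {d m : ℕ} (blk : Fin d → Fin m) (Q : Fin m → Matrix (Fin d) (Fin d) ℝ) : ℝ :=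
  Real.sqrt (2 * specNorm (Qtilde blk Q))

def BlockLip {d m : ℕ} (blk : Fin d → Fin m) (f : Euc d → ℝ)
    (Q : Fin m → Matrix (Fin d) (Fin d) ℝ) : Prop :=
  ∀ (j : Fin m) (x y : Euc d),
    ‖blockMask blk j (gradient f x) - blockMask blk j (gradient f y)‖ ^ 2 ≤
      quadForm (Q j) (x - y)

def SubgradStrongConvex {d : ℕ} (γ : ℝ) (g : Euc d → ℝ) : Prop :=
  ∀ x y s : Euc d, (∀ z, g x + ⟪s, z - x⟫ ≤ g z) →
    g x + ⟪s, y - x⟫ + γ / 2 * ‖y - x‖ ^ 2 ≤ g y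

lemma quadForm_inner {d : ℕ} (Q : Matrix (Fin d) (Fin d) ℝ) (z : Euc d) :
    quadForm Q z = ⟪z, Matrix.toEuclideanCLM (𝕜 := ℝ) Q z⟫ := by
  have h : ∀ i, (Matrix.toEuclideanCLM (𝕜 := ℝ) Q z) i = ∑ i', Q i i' * z i' := by
    intro i
    have := congrFun (Matrix.ofLp_toEuclideanCLM (𝕜 := ℝ) Q z) i
    simpa [Matrix.mulVec, dotProduct] using this
  simp only [quadForm, EuclideanSpace.inner_eq_star_dotProduct]
  simp [h, dotProduct, Finset.mul_sum, mul_comm, mul_left_comm, mul_assoc]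

lemma quadForm_add {d : ℕ} (A B : Matrix (Fin d) (Fin d) ℝ) (z : Euc d) :
    quadForm (A + B) z = quadForm A z + quadForm B z := by
  simp [quadForm, Matrix.add_apply, add_mul, Finset.sum_add_distrib]

lemma quadForm_sum {d : ℕ} {ι : Type*} (s : Finset ι)
    (M : ι → Matrix (Fin d) (Fin d) ℝ) (z : Euc d) :
    quadForm (∑ j ∈ s, M j) z = ∑ j ∈ s, quadForm (M j) z := by
  induction s using Finset.cons_induction with
  | empty => simp [quadForm]
  | cons a s ha ih => simp [Finset.sum_cons, quadForm_add, ih]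

lemma quadForm_nonneg {d : ℕ} {Q : Matrix (Fin d) (Fin d) ℝ} (h : Q.PosSemidef)
    (z : Euc d) : 0 ≤ quadForm Q z := by
  have := h.dotProduct_mulVec_nonneg (fun i => z i)
  simpa [quadForm, dotProduct, Matrix.mulVec, Finset.mul_sum, mul_comm,
    mul_left_comm, mul_assoc] using this

lemma quadForm_keepGE {d m : ℕ} (blk : Fin d → Fin m) (k : ℕ)
    (Q : Matrix (Fin d) (Fin d) ℝ) (z : Euc d) :
    quadForm (keepGE blk k Q) z =
      quadForm Q ((EuclideanSpace.equiv (Fin d) ℝ).symm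
        fun i => if k ≤ (blk i : ℕ) + 1 then z i else 0) := by
  have e : ∀ f : Fin d → ℝ, ∀ i, ((EuclideanSpace.equiv (Fin d) ℝ).symm f) i = f i :=
    fun f i => rfl
  simp only [quadForm, keepGE, Matrix.of_apply, e]
  refine Finset.sum_congr rfl fun i _ => Finset.sum_congr rfl fun i' _ => ?_
  by_cases h1 : k ≤ (blk i : ℕ) + 1 <;> by_cases h2 : k ≤ (blk i' : ℕ) + 1 <;>
    simp [h1, h2]

lemma quadForm_keepGE_nonneg {d m : ℕ} (blk : Fin d → Fin m) (k : ℕ)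
    {Q : Matrix (Fin d) (Fin d) ℝ} (h : Q.PosSemidef) (z : Euc d) :
    0 ≤ quadForm (keepGE blk k Q) z := by
  rw [quadForm_keepGE]; exact quadForm_nonneg h _

lemma quadForm_combine {d m : ℕ} (blk : Fin d → Fin m) (j : ℕ)
    (Q : Matrix (Fin d) (Fin d) ℝ) (x y : Euc d) :
    quadForm Q (x - blockCombine blk (j + 1) x y) =
      quadForm (keepGE blk (j + 2) Q) (y - x) := by
  have ec : ∀ i, (blockCombine blk (j + 1) x y) i =
      if (blk i : ℕ) + 1 ≤ j + 1 then x i else y i := fun i => rfl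
  have e : ∀ a b : Euc d, ∀ i, (a - b) i = a i - b i := fun a b i => rfl
  simp only [quadForm, keepGE, Matrix.of_apply]
  refine Finset.sum_congr rfl fun i _ => Finset.sum_congr rfl fun i' _ => ?_
  rw [e, e, e, e, ec, ec]
  by_cases c1 : (blk i : ℕ) + 1 ≤ j + 1 <;> by_cases c2 : (blk i' : ℕ) + 1 ≤ j + 1
  · rw [if_pos c1, if_pos c2, if_neg (by omega)]; ring
  · rw [if_pos c1, if_neg c2, if_neg (by omega)]; ring
  · rw [if_neg c1, if_pos c2, if_neg (by omega)]; ring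
  · rw [if_neg c1, if_neg c2, if_pos ⟨by omega, by omega⟩]; ring

theorem stmt4 {d m : ℕ} (blk : Fin d → Fin m) (hmono : Monotone blk)
    (hsurj : Function.Surjective blk)
    (Q : Fin m → Matrix (Fin d) (Fin d) ℝ) (hpsd : ∀ j, (Q j).PosSemidef) :
    ∀ x y : Euc d,
      (∑ j : Fin m, quadForm (Q j) (x - blockCombine blk ((j : ℕ) + 1) x y) ≤
        quadForm (Qtilde blk Q) (y - x)) ∧
      quadForm (Qtilde blk Q) (y - x) ≤ bigL blk Q ^ 2 / 2 * ‖y - x‖ ^ 2 := by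
  intro x y
  have hQt : quadForm (Qtilde blk Q) (y - x) =
      ∑ j : Fin m, (quadForm (keepGE blk ((j : ℕ) + 1) (Q j)) (y - x) +
        quadForm (keepGE blk ((j : ℕ) + 2) (Q j)) (y - x)) := by
    rw [Qtilde, quadForm_sum]
    exact Finset.sum_congr rfl fun j _ => quadForm_add _ _ _
  constructor
  · rw [hQt]
    refine Finset.sum_le_sum fun j _ => ?_
    rw [quadForm_combine]
    have := quadForm_keepGE_nonneg blk ((j : ℕ) + 1) (hpsd j) (y - x)
    linarith
  · have hL : bigL blk Q ^ 2 / 2 = specNorm (Qtilde blk Q) := by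
      rw [bigL, Real.sq_sqrt (by have : (0:ℝ) ≤ specNorm (Qtilde blk Q) := norm_nonneg _; linarith)]
      ring
    rw [hL, quadForm_inner]
    set A := Matrix.toEuclideanCLM (𝕜 := ℝ) (Qtilde blk Q)
    calc ⟪y - x, A (y - x)⟫ ≤ ‖y - x‖ * ‖A (y - x)‖ := real_inner_le_norm _ _
      _ ≤ ‖y - x‖ * (‖A‖ * ‖y - x‖) := by
          exact mul_le_mul_of_nonneg_left (A.le_opNorm _) (norm_nonneg _)
      _ = specNorm (Qtilde blk Q) * ‖y - x‖ ^ 2 := by rw [specNorm]; ring
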